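/- Let G be a group acting transitively on a finite set Ω, and let H ≤ G be a subgroup that is semiregular on Ω with exactly two orbits H_0 and H_1. Let 𝓑 be a G-invariant partition of Ω. Then either every block B ∈ 𝓑 is a subset of H_0 or of H_1, or every block B ∈ 𝓑 satisfies B ∩ H_0 ≠ ∅ and B ∩ H_1 ≠ ∅. -/
import Mathlib


/-- Lemma 3.2: let `G` act transitively on a finite set `Ω`, and let `H ≤ G` be
semiregular with exactly two orbits `H0` and `H1`. For any `G`-invariant partition `𝓑`
of `Ω`, either every block is contained in `H0` or in `H1`, or every block meets both
`H0` and `H1`. -/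
theorem blocks_vs_biregular_orbits
    (G : Type*) [Group G] (Ω : Type*) [Fintype Ω] [MulAction G Ω]
    [MulAction.IsPretransitive G Ω]
    (H : Subgroup G)
    (hsemi : ∀ h : H, ∀ ω : Ω, (h : G) • ω = ω → h = 1)
    (H0 H1 : Set Ω) (ω0 ω1 : Ω)
    (hH0 : H0 = MulAction.orbit H ω0) (hH1 : H1 = MulAction.orbit H ω1)
    (hne : H0 ≠ H1) (hcover : H0 ∪ H1 = Set.univ)
    (𝓑 : Set (Set Ω)) (hpart : Setoid.IsPartition 𝓑)
    (hinv : ∀ g : G, ∀ B ∈ 𝓑, (fun ω => g • ω) '' B ∈ 𝓑) :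
    (∀ B ∈ 𝓑, B ⊆ H0 ∨ B ⊆ H1) ∨
    (∀ B ∈ 𝓑, (B ∩ H0).Nonempty ∧ (B ∩ H1).Nonempty) := by
  classical
  -- H preserves each of its orbits
  have mem0 : ∀ (h : H) (ω : Ω), ω ∈ H0 → (h : G) • ω ∈ H0 := by
    intro h ω hω
    rw [hH0] at hω ⊢
    obtain ⟨b, hb⟩ := hω
    refine ⟨h * b, ?_⟩
    show (h * b) • ω0 = (h : G) • ω
    rw [mul_smul]
    have hb' : b • ω0 = ω := hb
    rw [hb', Subgroup.smul_def]
  have mem1 : ∀ (h : H) (ω : Ω), ω ∈ H1 → (h : G) • ω ∈ H1 := by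
    intro h ω hω
    rw [hH1] at hω ⊢
    obtain ⟨b, hb⟩ := hω
    refine ⟨h * b, ?_⟩
    show (h * b) • ω1 = (h : G) • ω
    rw [mul_smul]
    have hb' : b • ω1 = ω := hb
    rw [hb', Subgroup.smul_def]
  -- two points of the same orbit are related by an element of H
  have same0 : ∀ y c : Ω, y ∈ H0 → c ∈ H0 → ∃ h : H, (h : G) • y = c := by
    intro y c hy hc
    rw [hH0] at hy hc
    obtain ⟨a, ha⟩ := hc
    obtain ⟨b, hb⟩ := hy
    refine ⟨a * b⁻¹, ?_⟩
    have ha' : a • ω0 = c := ha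
    have hb' : b • ω0 = y := hb
    rw [← Subgroup.smul_def, ← ha', ← hb', smul_smul, inv_mul_cancel_right]
  have same1 : ∀ y c : Ω, y ∈ H1 → c ∈ H1 → ∃ h : H, (h : G) • y = c := by
    intro y c hy hc
    rw [hH1] at hy hc
    obtain ⟨a, ha⟩ := hc
    obtain ⟨b, hb⟩ := hy
    refine ⟨a * b⁻¹, ?_⟩
    have ha' : a • ω1 = c := ha
    have hb' : b • ω1 = y := hb
    rw [← Subgroup.smul_def, ← ha', ← hb', smul_smul, inv_mul_cancel_right]
  by_cases hall : ∀ B ∈ 𝓑, B ⊆ H0 ∨ B ⊆ H1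
  · exact Or.inl hall
  right
  push_neg at hall
  obtain ⟨B, hB, hB0, hB1⟩ := hall
  -- B meets both orbits
  obtain ⟨x, hxB, hx1'⟩ := Set.not_subset.mp hB0
  obtain ⟨y, hyB, hy0'⟩ := Set.not_subset.mp hB1
  have hx1 : x ∈ H1 := by
    have := Set.mem_univ x; rw [← hcover] at this
    exact this.resolve_left hx1'
  have hy0 : y ∈ H0 := by
    have := Set.mem_univ y; rw [← hcover] at this
    exact this.resolve_right hy0'
  intro C hC
  have hCne : C.Nonempty := by
    rw [Set.nonempty_iff_ne_empty]; rintro rfl; exact hpart.1 hC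
  obtain ⟨c, hcC⟩ := hCne
  have hc : c ∈ H0 ∨ c ∈ H1 := by
    have := Set.mem_univ c; rw [← hcover] at this; exact this
  obtain ⟨D, ⟨hD𝓑, hcD⟩, huniq⟩ := hpart.2 c
  have e1 : C = D := huniq C ⟨hC, hcC⟩
  rcases hc with hc0 | hc1
  · obtain ⟨h, hh⟩ := same0 y c hy0 hc0
    have himg : (fun ω => (h : G) • ω) '' B ∈ 𝓑 := hinv _ B hB
    have e2 : ((fun ω => (h : G) • ω) '' B) = D :=
      huniq _ ⟨himg, ⟨y, hyB, hh⟩⟩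
    have hCB : C = (fun ω => (h : G) • ω) '' B := by rw [e1, ← e2]
    constructor
    · exact ⟨c, hcC, hc0⟩
    · refine ⟨(h : G) • x, ?_, mem1 h x hx1⟩
      rw [hCB]; exact ⟨x, hxB, rfl⟩
  · obtain ⟨h, hh⟩ := same1 x c hx1 hc1
    have himg : (fun ω => (h : G) • ω) '' B ∈ 𝓑 := hinv _ B hB
    have e2 : ((fun ω => (h : G) • ω) '' B) = D :=
      huniq _ ⟨himg, ⟨x, hxB, hh⟩⟩
    have hCB : C = (fun ω => (h : G) • ω) '' B := by rw [e1, ← e2]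
    constructor
    · refine ⟨(h : G) • y, ?_, mem0 h y hy0⟩
      rw [hCB]; exact ⟨y, hyB, rfl⟩
    · exact ⟨c, hcC, hc1⟩
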